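/- No-go theorem for cyclic multimode squeezed vacua: fix N ≥ 3, parameters α : Fin N → ℂ, and C : (Fin N → ℕ) → ℂ satisfying the cyclic N-mode squeezing equations: for every i ∈ Fin N (with i+1 taken cyclically) and every occupation vector m : Fin N → ℕ, √(m i + 1) · C (m + eᵢ) equals αᵢ · √(m (i+1)) · C (m − e_{i+1}) when m (i+1) ≥ 1, and equals 0 when m (i+1) = 0. Then C (m) = 0 for every m ≠ 0; i.e. the only solutions are multiples of the vacuum |0,…,0⟩. -/

import Mathlib

/-- No-go theorem for cyclic multimode squeezed vacua: for `N ≥ 3` modes, any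
solution of the cyclic N-mode squeezing equations vanishes away from the vacuum
occupation vector `0`. -/
theorem cyclic_N_mode_no_go (N : ℕ) [NeZero N] (hN : 3 ≤ N) (α : Fin N → ℂ)
    (C : (Fin N → ℕ) → ℂ)
    (hrec : ∀ (i : Fin N) (m : Fin N → ℕ), 1 ≤ m (i + 1) →
      (Real.sqrt (m i + 1) : ℂ) * C (m + Pi.single i 1) =
        α i * (Real.sqrt (m (i + 1)) : ℂ) * C (m - Pi.single (i + 1) 1))
    (hrec0 : ∀ (i : Fin N) (m : Fin N → ℕ), m (i + 1) = 0 →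
      (Real.sqrt (m i + 1) : ℂ) * C (m + Pi.single i 1) = 0) :
    ∀ m : Fin N → ℕ, m ≠ 0 → C m = 0 := by
  have hone : (1 : Fin N) ≠ 0 := by
    intro h
    have := congrArg Fin.val h
    rw [Fin.val_one', Fin.val_zero, Nat.mod_eq_of_lt (by omega)] at this
    omega
  have htwo : (1 + 1 : Fin N) ≠ 0 := by
    have hv : ((1 + 1 : Fin N) : ℕ) = 2 := by
      rw [Fin.val_add, Fin.val_one', Nat.mod_eq_of_lt (show (1 : ℕ) < N by omega),
        Nat.mod_eq_of_lt (by omega)]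
    intro h
    have := congrArg Fin.val h
    rw [hv, Fin.val_zero] at this
    omega
  have hsucc : ∀ i : Fin N, i + 1 ≠ i := by
    intro i h
    apply hone
    have h0 : i + 1 = i + 0 := by simpa using h
    exact add_left_cancel h0
  have hsucc2 : ∀ i : Fin N, i + 1 + 1 ≠ i := by
    intro i h
    apply htwo
    have h0 : i + (1 + 1) = i + 0 := by rw [← add_assoc, h, add_zero]
    exact add_left_cancel h0
  have hsqrt_ne : ∀ n : ℕ, ((Real.sqrt (n + 1) : ℝ) : ℂ) ≠ 0 := by
    intro n
    rw [Complex.ofReal_ne_zero]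
    exact ne_of_gt (Real.sqrt_pos.mpr (by positivity))
  -- L0 : if n j ≥ 1 and n (j+1) = 0 then C n = 0
  have L0 : ∀ (j : Fin N) (n : Fin N → ℕ), 1 ≤ n j → n (j + 1) = 0 → C n = 0 := by
    intro j n hj hj1
    set n' : Fin N → ℕ := n - Pi.single j 1 with hn'
    have hz : n' (j + 1) = 0 := by
      simp only [hn', Pi.sub_apply]
      omega
    have h := hrec0 j n' hz
    have heq : n' + Pi.single j 1 = n := by
      funext k
      by_cases hk : k = j
      · subst hk
        simp only [hn', Pi.add_apply, Pi.sub_apply, Pi.single_eq_same]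
        omega
      · simp [hn', Pi.single_eq_of_ne hk]
    rw [heq] at h
    have hval : n' j = n j - 1 := by
      simp [hn', Pi.single_eq_same]
    rw [hval] at h
    rcases mul_eq_zero.mp h with h' | h'
    · exact absurd h' (by exact_mod_cast hsqrt_ne (n j - 1))
    · exact h'
  -- L1 : descent step
  have L1 : ∀ (i : Fin N) (n : Fin N → ℕ), 1 ≤ n i → 1 ≤ n (i + 1) →
      C (n - Pi.single i 1 - Pi.single (i + 1) 1) = 0 → C n = 0 := by
    intro i n hi hi1 hz
    set n' : Fin N → ℕ := n - Pi.single i 1 with hn'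
    have hge : 1 ≤ n' (i + 1) := by
      simp only [hn', Pi.sub_apply, Pi.single_eq_of_ne (hsucc i)]
      omega
    have h := hrec i n' hge
    have heq : n' + Pi.single i 1 = n := by
      funext k
      by_cases hk : k = i
      · subst hk
        simp only [hn', Pi.add_apply, Pi.sub_apply, Pi.single_eq_same]
        omega
      · simp [hn', Pi.single_eq_of_ne hk]
    rw [heq, hz, mul_zero] at h
    have hval : n' i = n i - 1 := by
      simp [hn', Pi.single_eq_same]
    rw [hval] at h
    rcases mul_eq_zero.mp h with h' | h'
    · exact absurd h' (by exact_mod_cast hsqrt_ne (n i - 1))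
    · exact h'
  -- main induction on total occupation number
  have key : ∀ s : ℕ, ∀ m : Fin N → ℕ, (∑ k, m k) ≤ s → m ≠ 0 → C m = 0 := by
    intro s
    induction s with
    | zero =>
      intro m hs hm
      refine absurd (funext fun k => ?_) hm
      have := Finset.sum_eq_zero_iff.mp (Nat.le_zero.mp hs) k (Finset.mem_univ k)
      simpa using this
    | succ s ih =>
      intro m hs hm
      obtain ⟨i, hi⟩ : ∃ i, 1 ≤ m i := by
        by_contra h
        push_neg at h
        refine hm (funext fun k => ?_)
        have := h k
        simp only [Pi.zero_apply]
        omega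
      by_cases h1 : m (i + 1) = 0
      · exact L0 i m hi h1
      · set m' : Fin N → ℕ := m - Pi.single i 1 - Pi.single (i + 1) 1 with hm'
        by_cases h0 : m' = 0
        · -- m is supported on {i, i+1}; kill at j = i+1 using m (i+2) = 0
          apply L0 (i + 1) m (by omega)
          have h2 := congrFun h0 (i + 1 + 1)
          simp only [hm', Pi.sub_apply, Pi.zero_apply,
            Pi.single_eq_of_ne (hsucc2 i), Pi.single_eq_of_ne (hsucc (i + 1))] at h2
          omega
        · apply L1 i m hi (by omega)
          apply ih m' ?_ h0
          have hlt : (∑ k, m' k) < ∑ k, m k := by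
            apply Finset.sum_lt_sum
            · intro k _
              simp only [hm', Pi.sub_apply]
              omega
            · refine ⟨i, Finset.mem_univ i, ?_⟩
              simp only [hm', Pi.sub_apply, Pi.single_eq_same,
                Pi.single_eq_of_ne (Ne.symm (hsucc i))]
              omega
          omega
  intro m hm
  exact key (∑ k, m k) m le_rfl hm
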